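/- Let f : V → ℕ be TTL values on n nodes at time t, updated each round by f'(v) = max(0, (max over the closed neighborhood of v in the connected graph G_t of f) − 1), where additionally at every time at least one node w has f(w) = m (a source refreshing to the maximum m, with m ≥ n). Then after at most n − 1 rounds, every node v satisfies f(v) ≥ m − (n − 1) ≥ 1; i.e., no node's TTL ever reaches 0. -/
import Mathlib


/-- In a dynamic network whose every snapshot is connected, if TTL
values are updated each round to (the maximum of the previous values over the closed
neighborhood) minus one — except that at every time some source node holds the
maximum value `m ≥ n` — then after at most `n − 1` rounds every node's value is at
least `m − (n − 1) ≥ 1`; in particular no node's TTL ever reaches 0 from then on. -/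
theorem stmt_15 {V : Type*} [Fintype V] [DecidableEq V] (n : ℕ)
    (hn : Fintype.card V = n) (hn1 : 1 ≤ n)
    (G : ℕ → SimpleGraph V) [∀ t, DecidableRel (G t).Adj]
    (hconn : ∀ t, (G t).Connected)
    (m : ℕ) (hm : n ≤ m)
    (f : ℕ → V → ℕ)
    (hle : ∀ (t : ℕ) (v : V), f t v ≤ m)
    (hsrc : ∀ t : ℕ, ∃ w : V, f t w = m)
    (hupd : ∀ (t : ℕ) (v : V),
      f (t + 1) v = m ∨
      f (t + 1) v = (((G t).neighborFinset v).sup (f t) ⊔ f t v) - 1) :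
    1 ≤ m - (n - 1) ∧
      ∀ t : ℕ, n - 1 ≤ t → ∀ v : V, m - (n - 1) ≤ f t v ∧ 1 ≤ f t v := by
  have key : ∀ k t : ℕ, ∃ S : Finset V,
      min (k + 1) n ≤ S.card ∧ ∀ v ∈ S, m - k ≤ f (t + k) v := by
    intro k
    induction k with
    | zero =>
      intro t
      obtain ⟨w, hw⟩ := hsrc t
      refine ⟨{w}, ?_, ?_⟩
      · simp [hn1]
      · intro v hv
        simp only [Finset.mem_singleton] at hv
        subst hv; simp [hw]
    | succ k ih =>
      intro t
      obtain ⟨S, hScard, hS⟩ := ih t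
      -- a node gets value ≥ m - (k+1) at time t+k+1 if some closed neighbor is in S
      have step : ∀ v : V, (v ∈ S ∨ ∃ u ∈ S, (G (t + k)).Adj v u) →
          m - (k + 1) ≤ f (t + k + 1) v := by
        intro v hv
        rcases hupd (t + k) v with h | h
        · rw [h]; omega
        · rw [h]
          have hsup : m - k ≤ ((G (t + k)).neighborFinset v).sup (f (t + k)) ⊔ f (t + k) v := by
            rcases hv with hv | ⟨u, huS, hadj⟩
            · exact le_sup_of_le_right (hS v hv)
            · refine le_sup_of_le_left ?_
              exact Finset.le_sup_of_le ((G (t + k)).mem_neighborFinset v u |>.mpr hadj)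
                (hS u huS)
          omega
      by_cases hcov : S = Finset.univ
      · refine ⟨Finset.univ, by simp [Finset.card_univ, hn], ?_⟩
        intro v _
        have := step v (Or.inl (by simp [hcov]))
        simpa [Nat.add_assoc] using this
      · -- S is not everything; find a boundary edge
        have hSne : S.Nonempty := by
          rcases Finset.eq_empty_or_nonempty S with h | h
          · exfalso; rw [h] at hScard; simp at hScard; omega
          · exact h
        obtain ⟨u, huS⟩ := hSne
        obtain ⟨w, hw⟩ : ∃ w, w ∉ S := by
          by_contra h; push_neg at h
          exact hcov (Finset.eq_univ_iff_forall.mpr h)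
        obtain ⟨p⟩ := (hconn (t + k)).preconnected u w
        obtain ⟨d, _, hd⟩ := p.exists_boundary_dart (↑S) huS hw
        have hadj : (G (t + k)).Adj d.snd d.fst := d.adj.symm
        refine ⟨insert d.snd S, ?_, ?_⟩
        · have hcard : (insert d.snd S).card = S.card + 1 :=
            Finset.card_insert_of_notMem hd.2
          have hle' : S.card ≤ n := hn ▸ Finset.card_le_univ S
          have hne' : S.card ≠ n := fun h => hcov (Finset.eq_univ_of_card S (by rw [h, hn]))
          omega
        · intro v hv
          rw [Finset.mem_insert] at hv
          have : m - (k + 1) ≤ f (t + k + 1) v := by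
            rcases hv with hv | hv
            · subst hv; exact step _ (Or.inr ⟨d.fst, hd.1, hadj⟩)
            · exact step v (Or.inl hv)
          simpa [Nat.add_assoc] using this
  constructor
  · omega
  · intro t ht v
    obtain ⟨S, hScard, hS⟩ := key (n - 1) (t - (n - 1))
    have hSuniv : S = Finset.univ := by
      apply Finset.eq_univ_of_card
      have : S.card ≤ Fintype.card V := Finset.card_le_univ S
      omega
    have := hS v (by simp [hSuniv])
    rw [Nat.sub_add_cancel ht] at this
    exact ⟨this, by omega⟩
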